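/- If a constant game A is static and Φ is a legal position of A, then the game ⟨Φ⟩A (prefixation of A by Φ), defined by Lr_{⟨Φ⟩A} = {Γ : ⟨Φ, Γ⟩ ∈ Lr_A} and Wn_{⟨Φ⟩A}(Γ) = Wn_A(⟨Φ, Γ⟩), is also static. -/

import Mathlib

/-- A run: a finite sequence of labmoves; a labmove is a pair (player, move),
player `true` = ⊤ (machine), `false` = ⊥ (environment). -/
abbrev Run (M : Type*) := List (Bool × M)

/-- Indices (0-based positions) of the `q`-labeled moves of a run. -/
def labelIndices {M : Type*} (Γ : Run M) (q : Bool) : List ℕ :=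
  ((List.range Γ.length).zip Γ).filterMap fun x => if x.2.1 = q then some x.1 else none

/-- In `Γ`, the `k`-th `(¬p)`-labeled move occurs strictly earlier (to the
left) than the `n`-th `p`-labeled move (`k`, `n` are 0-based here). -/
def kthPrecedes {M : Type*} (Γ : Run M) (p : Bool) (k n : ℕ) : Prop :=
  ∃ i j, (labelIndices Γ (!p))[k]? = some i ∧ (labelIndices Γ p)[n]? = some j ∧ i < j

/-- `IsDelay p Γ Δ` says that `Δ` is a `p`-delay of `Γ`: (1) same subsequence
of `p`-labeled moves and same subsequence of `(¬p)`-labeled moves; (2) whenever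
the `k`-th `(¬p)`-labeled move precedes the `n`-th `p`-labeled move in `Γ`, the
same holds in `Δ`. -/
def IsDelay {M : Type*} (p : Bool) (Γ Δ : Run M) : Prop :=
  Δ.filter (fun x => x.1 == p) = Γ.filter (fun x => x.1 == p) ∧
  Δ.filter (fun x => x.1 == !p) = Γ.filter (fun x => x.1 == !p) ∧
  ∀ k n, kthPrecedes Γ p k n → kthPrecedes Δ p k n

/-- A constant game: a pair (Lr, Wn) of a set of (legal) runs and a function
assigning to each run a winner (`true` = ⊤, `false` = ⊥). -/
structure ConstGame (M : Type*) where
  Lr : Set (Run M)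
  Wn : Run M → Bool

/-- A constant game is static iff for every player `p` and all runs Γ, Δ such
that Δ is a `p`-delay of Γ: if Γ is won by `p`, then so is Δ. -/
def ConstGame.Static {M : Type*} (A : ConstGame M) : Prop :=
  ∀ (p : Bool) (Γ Δ : Run M), IsDelay p Γ Δ → A.Wn Γ = p → A.Wn Δ = p

/-- Prefixation: the game ⟨Φ⟩A, defined for a legal position Φ of A by
`Lr_{⟨Φ⟩A} = {Γ | ⟨Φ,Γ⟩ ∈ Lr_A}` and `Wn_{⟨Φ⟩A}(Γ) = Wn_A(⟨Φ,Γ⟩)`. -/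
def ConstGame.pre {M : Type*} (A : ConstGame M) (Φ : Run M) : ConstGame M where
  Lr := {Γ | Φ ++ Γ ∈ A.Lr}
  Wn := fun Γ => A.Wn (Φ ++ Γ)


lemma labelIndices_enumFrom {M : Type*} (Γ : Run M) (q : Bool) :
    ∀ n, ((List.range' n Γ.length).zip Γ).filterMap (fun x => if x.2.1 = q then some x.1 else none)
      = (labelIndices Γ q).map (· + n) := by
  intro n
  rw [List.range'_eq_map_range, labelIndices, List.map_filterMap, List.zip_map_left,
    List.filterMap_map]
  apply List.filterMap_congr
  intro x _
  by_cases h : x.2.1 = q <;> simp [h, Nat.add_comm]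

lemma labelIndices_cons {M : Type*} (a : Bool × M) (Γ : Run M) (q : Bool) :
    labelIndices (a :: Γ) q
      = (if a.1 = q then [0] else []) ++ (labelIndices Γ q).map (· + 1) := by
  rw [← labelIndices_enumFrom Γ q 1]
  simp only [labelIndices, List.length_cons, List.range_succ_eq_map, List.zip_cons_cons,
    List.filterMap_cons, List.range'_eq_map_range]
  by_cases h : a.1 = q <;> simp [h, Nat.add_comm]

lemma labelIndices_append {M : Type*} (Φ Γ : Run M) (q : Bool) :
    labelIndices (Φ ++ Γ) q
      = labelIndices Φ q ++ (labelIndices Γ q).map (· + Φ.length) := by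
  induction Φ with
  | nil => simp [labelIndices]
  | cons a Φ ih =>
    rw [List.cons_append, labelIndices_cons, labelIndices_cons, ih]
    by_cases h : a.1 = q <;>
      simp [h, List.map_map, Function.comp, Nat.add_assoc, Nat.add_comm 1 Φ.length]

lemma labelIndices_length {M : Type*} (Γ : Run M) (q : Bool) :
    (labelIndices Γ q).length = (Γ.filter (fun x => x.1 == q)).length := by
  induction Γ with
  | nil => simp [labelIndices]
  | cons a Γ ih =>
    rw [labelIndices_cons, List.filter_cons]
    by_cases h : a.1 = q <;> simp [h, ih]

lemma labelIndices_lt {M : Type*} (Γ : Run M) (q : Bool) :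
    ∀ i ∈ labelIndices Γ q, i < Γ.length := by
  induction Γ with
  | nil => simp [labelIndices]
  | cons a Γ ih =>
    intro i hi
    rw [labelIndices_cons] at hi
    rcases List.mem_append.1 hi with h | h
    · by_cases hq : a.1 = q <;> simp [hq] at h
      subst h; simp
    · obtain ⟨j, hj, rfl⟩ := List.mem_map.1 h
      have := ih j hj
      simp only [List.length_cons]; omega

lemma isDelay_append {M : Type*} (p : Bool) (Φ Γ Δ : Run M)
    (h : IsDelay p Γ Δ) : IsDelay p (Φ ++ Γ) (Φ ++ Δ) := by
  obtain ⟨h1, h2, h3⟩ := h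
  have lenp : (labelIndices Δ p).length = (labelIndices Γ p).length := by
    rw [labelIndices_length, labelIndices_length, h1]
  have lennp : (labelIndices Δ (!p)).length = (labelIndices Γ (!p)).length := by
    rw [labelIndices_length, labelIndices_length, h2]
  refine ⟨by simp [List.filter_append, h1], by simp [List.filter_append, h2], ?_⟩
  intro k n ⟨i, j, hi, hj, hij⟩
  rw [labelIndices_append] at hi hj
  set L := Φ.length
  set a := (labelIndices Φ (!p)).length with ha
  set b := (labelIndices Φ p).length with hb
  by_cases hk : k < a
  · rw [List.getElem?_append_left hk] at hi
    have hiL : i < L := labelIndices_lt Φ (!p) i (List.mem_of_getElem? hi)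
    by_cases hn : n < b
    · rw [List.getElem?_append_left hn] at hj
      exact ⟨i, j, by rw [labelIndices_append, List.getElem?_append_left hk]; exact hi,
        by rw [labelIndices_append, List.getElem?_append_left hn]; exact hj, hij⟩
    · push_neg at hn
      rw [List.getElem?_append_right hn, List.getElem?_map] at hj
      obtain ⟨j', hj', rfl⟩ := Option.map_eq_some_iff.1 hj
      have hlt : n - b < (labelIndices Δ p).length := by
        rw [lenp]; exact (List.getElem?_eq_some_iff.1 hj').1
      refine ⟨i, (labelIndices Δ p)[n-b] + L, ?_, ?_, by omega⟩
      · rw [labelIndices_append, List.getElem?_append_left hk]; exact hi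
      · rw [labelIndices_append, List.getElem?_append_right hn, List.getElem?_map,
          List.getElem?_eq_getElem hlt]
        rfl
  · push_neg at hk
    rw [List.getElem?_append_right hk, List.getElem?_map] at hi
    obtain ⟨i', hi', rfl⟩ := Option.map_eq_some_iff.1 hi
    by_cases hn : n < b
    · rw [List.getElem?_append_left hn] at hj
      have : j < L := labelIndices_lt Φ p j (List.mem_of_getElem? hj)
      omega
    · push_neg at hn
      rw [List.getElem?_append_right hn, List.getElem?_map] at hj
      obtain ⟨j', hj', rfl⟩ := Option.map_eq_some_iff.1 hj
      obtain ⟨i2, j2, hi2, hj2, hij2⟩ := h3 (k - a) (n - b) ⟨i', j', hi', hj', by omega⟩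
      refine ⟨i2 + L, j2 + L, ?_, ?_, by omega⟩
      · rw [labelIndices_append, List.getElem?_append_right hk, List.getElem?_map, hi2]; rfl
      · rw [labelIndices_append, List.getElem?_append_right hn, List.getElem?_map, hj2]; rfl

/-- If a constant game A is static and Φ is a legal position (finite legal run)
of A, then the prefixation ⟨Φ⟩A is also static. -/
theorem pre_static {M : Type*} (A : ConstGame M) (hA : A.Static)
    (Φ : Run M) (hΦ : Φ ∈ A.Lr) : (A.pre Φ).Static := by
  intro p Γ Δ hDel hW
  exact hA p (Φ ++ Γ) (Φ ++ Δ) (isDelay_append p Φ Γ Δ hDel) hW
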